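/- For α ∈ (0,2), the map h_{α−1}(x) = |x|^{α−1} on ℝ∖{0} satisfies: for every x > 0, ∫_{−∞}^0 P_D(x,y)·|y|^{α−1} dy = x^{α−1}, where P_D(x,y) = (1/π)·sin(πα/2)·x^{α/2}/(|y|^{α/2}·|x−y|) is the Poisson kernel of the half-line D = (0,∞) for the fractional Laplacian. -/

import Mathlib

open MeasureTheory Set Real

lemma beta_step (a : ℝ) (h0 : 0 < a) (h1 : a < 1) :
    ∫ t in Set.Ioo (0:ℝ) 1, t ^ (a-1) * (1-t) ^ (-a) = π / Real.sin (π * a) := by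
  have key := Complex.Gamma_mul_Gamma_eq_betaIntegral (s := (a:ℂ)) (t := ((1-a:ℝ):ℂ))
    (by simpa using h0) (by simpa [sub_pos] using h1)
  have h11 : (a:ℂ) + ((1-a:ℝ):ℂ) = 1 := by push_cast; ring
  rw [h11, Complex.Gamma_one, one_mul] at key
  have hco : Complex.betaIntegral (a:ℂ) ((1-a:ℝ):ℂ)
      = ((∫ t in (0:ℝ)..1, t ^ (a-1) * (1-t) ^ (-a) : ℝ) : ℂ) := by
    rw [Complex.betaIntegral, ← intervalIntegral.integral_ofReal]
    apply intervalIntegral.integral_congr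
    intro t ht
    rw [Set.uIcc_of_le (by norm_num)] at ht
    have ht0 : (0:ℝ) ≤ t := ht.1
    have ht1 : (0:ℝ) ≤ 1 - t := by linarith [ht.2]
    push_cast
    rw [Complex.ofReal_cpow ht0, Complex.ofReal_cpow ht1]
    push_cast
    rw [show (1:ℂ) - (a:ℂ) - 1 = -(a:ℂ) by ring]
  rw [hco, Complex.Gamma_ofReal, Complex.Gamma_ofReal, ← Complex.ofReal_mul] at key
  have := Complex.ofReal_injective key
  rw [Real.Gamma_mul_Gamma_one_sub a] at this
  rw [intervalIntegral.integral_of_le (by norm_num),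
    MeasureTheory.integral_Ioc_eq_integral_Ioo] at this
  exact this.symm

lemma frac_int (a : ℝ) (h0 : 0 < a) (h1 : a < 1) :
    ∫ z in Set.Ioi (0:ℝ), z ^ (a-1) / (1+z) = π / Real.sin (π * a) := by
  have himg : (fun t : ℝ => t / (1 - t)) '' Set.Ioo 0 1 = Set.Ioi (0:ℝ) := by
    ext z
    simp only [Set.mem_image, Set.mem_Ioo, Set.mem_Ioi]
    constructor
    · rintro ⟨t, ⟨ht0, ht1⟩, rfl⟩
      exact div_pos ht0 (by linarith)
    · intro hz
      refine ⟨z / (1 + z), ⟨by positivity, ?_⟩, ?_⟩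
      · rw [div_lt_one (by linarith)]; linarith
      · field_simp; ring
  have hderiv : ∀ t ∈ Set.Ioo (0:ℝ) 1, HasDerivWithinAt (fun t : ℝ => t / (1 - t))
      ((1 - t)⁻¹ ^ 2) (Set.Ioo 0 1) t := by
    intro t ht
    have hne : 1 - t ≠ 0 := by rw [Set.mem_Ioo] at ht; intro h; linarith [ht.2]
    have := (hasDerivAt_id t).div ((hasDerivAt_const t 1).sub (hasDerivAt_id t)) hne
    refine HasDerivWithinAt.congr_deriv this.hasDerivWithinAt ?_
    simp only [Pi.sub_apply, id]
    field_simp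
    ring
  have hinj : Set.InjOn (fun t : ℝ => t / (1 - t)) (Set.Ioo 0 1) := by
    intro t1 h1' t2 h2' heq
    rw [Set.mem_Ioo] at h1' h2'
    have hne1 : 1 - t1 ≠ 0 := by intro h; linarith [h1'.2]
    have hne2 : 1 - t2 ≠ 0 := by intro h; linarith [h2'.2]
    field_simp at heq
    nlinarith [heq]
  have him := MeasureTheory.integral_image_eq_integral_abs_deriv_smul measurableSet_Ioo hderiv hinj
    (fun z => z ^ (a-1) / (1+z))
  rw [himg] at him
  rw [him, ← beta_step a h0 h1]
  apply MeasureTheory.setIntegral_congr_fun measurableSet_Ioo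
  intro t ht
  rw [Set.mem_Ioo] at ht
  have h1t : 0 < 1 - t := by linarith [ht.2]
  have h1pz : 1 + t / (1 - t) = (1 - t)⁻¹ := by field_simp; ring
  have A : (1-t)⁻¹^2 = (1-t)^(-2:ℝ) := by
    rw [← Real.rpow_neg_one (1-t), ← Real.rpow_natCast ((1-t)^(-1:ℝ)) 2,
      ← Real.rpow_mul h1t.le]
    norm_num
  have B : (t/(1-t))^(a-1) = t^(a-1) * (1-t)^(1-a) := by
    rw [Real.div_rpow ht.1.le h1t.le, div_eq_mul_inv, ← Real.rpow_neg h1t.le, neg_sub]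
  show |(1-t)⁻¹^2| • ((t/(1-t))^(a-1) / (1+t/(1-t))) = t^(a-1) * (1-t)^(-a)
  rw [smul_eq_mul, h1pz, div_eq_mul_inv, inv_inv, A, B, abs_of_pos (by positivity)]
  calc (1-t)^(-2:ℝ) * (t^(a-1) * (1-t)^(1-a) * (1-t))
      = t^(a-1) * ((1-t)^(-2:ℝ) * (1-t)^(1-a) * (1-t)^(1:ℝ)) := by
        rw [Real.rpow_one]; ring
    _ = t^(a-1) * (1-t)^(-a) := by
        rw [← Real.rpow_add h1t, ← Real.rpow_add h1t]
        rw [show (-2:ℝ)+(1-a)+1 = -a by ring]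

open MeasureTheory Set Real

theorem stmt_18 (α x : ℝ) (hα0 : 0 < α) (hα2 : α < 2) (hx : 0 < x) :
    ∫ y in Set.Iio (0 : ℝ),
      (1 / Real.pi) * Real.sin (Real.pi * α / 2) * x ^ (α / 2) /
        (|y| ^ (α / 2) * |x - y|) * |y| ^ (α - 1) = x ^ (α - 1) := by
  have ha2 : 0 < α / 2 := by linarith
  have ha2' : α / 2 < 1 := by linarith
  have hsin : 0 < Real.sin (Real.pi * α / 2) := by
    apply Real.sin_pos_of_pos_of_lt_pi
    · have := Real.pi_pos; positivity
    · nlinarith [Real.pi_pos]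
  set F : ℝ → ℝ := fun y => (1 / Real.pi) * Real.sin (Real.pi * α / 2) * x ^ (α / 2) /
        (|y| ^ (α / 2) * |x - y|) * |y| ^ (α - 1) with hF
  have s1 : ∫ y in Set.Iio (0:ℝ), F y = ∫ t in Set.Ioi (0:ℝ), F (-t) := by
    calc ∫ y in Set.Iio (0:ℝ), F y = ∫ y in Set.Iic (-0:ℝ), F y := by
          rw [neg_zero, MeasureTheory.integral_Iic_eq_integral_Iio]
      _ = ∫ t in Set.Ioi (0:ℝ), F (-t) := (integral_comp_neg_Ioi 0 F).symm
  have s2 : ∫ t in Set.Ioi (0:ℝ), F (-t) = x • ∫ z in Set.Ioi (0:ℝ), F (-(x*z)) := by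
    have key := MeasureTheory.integral_comp_mul_left_Ioi (fun t : ℝ => F (-t)) 0 hx
    rw [mul_zero] at key
    rw [key, smul_inv_smul₀ hx.ne']
  have ex : x * x ^ (α - 2) = x ^ (α - 1) := by
    nth_rewrite 1 [← Real.rpow_one x]
    rw [← Real.rpow_add hx, show (1:ℝ) + (α - 2) = α - 1 by ring]
  have s3 : ∀ z ∈ Set.Ioi (0:ℝ), F (-(x*z)) =
      ((1 / Real.pi) * Real.sin (Real.pi * α / 2) * x ^ (α - 2)) * (z ^ (α/2 - 1) / (1 + z)) := by
    intro z hz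
    rw [Set.mem_Ioi] at hz
    have hxz : 0 < x * z := mul_pos hx hz
    have h1z : 0 < 1 + z := by linarith
    have ez : z ^ (α/2 - 1) * z ^ (α/2) = z ^ (α - 1) := by
      rw [← Real.rpow_add hz, show α/2 - 1 + α/2 = α - 1 by ring]
    have ex2 : x ^ (α - 2) * x ^ (α/2) * x = x ^ (α/2) * x ^ (α - 1) := by
      nth_rewrite 3 [← Real.rpow_one x]
      rw [← Real.rpow_add hx, ← Real.rpow_add hx, ← Real.rpow_add hx,
        show α - 2 + α/2 + 1 = α/2 + (α - 1) by ring]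
    simp only [hF]
    rw [abs_neg, abs_of_pos hxz, show x - -(x*z) = x * (1 + z) by ring,
      abs_of_pos (mul_pos hx h1z), Real.mul_rpow hx.le hz.le, Real.mul_rpow hx.le hz.le]
    have n1 := (Real.rpow_pos_of_pos hx (α/2)).ne'
    have n2 := (Real.rpow_pos_of_pos hz (α/2)).ne'
    field_simp
    rw [show (α-2)/2 = α/2 - 1 by ring, ← ez]
    linear_combination (-(z^(α/2-1) * z^(α/2))) * ex
  have s4 : ∫ z in Set.Ioi (0:ℝ), F (-(x*z)) =
      ((1 / Real.pi) * Real.sin (Real.pi * α / 2) * x ^ (α - 2)) *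
        (Real.pi / Real.sin (Real.pi * (α/2))) := by
    rw [MeasureTheory.setIntegral_congr_fun measurableSet_Ioi s3,
      MeasureTheory.integral_const_mul, frac_int (α/2) ha2 ha2']
  rw [s1, s2, s4, smul_eq_mul, show Real.pi * (α/2) = Real.pi * α / 2 by ring]
  have hone : (1 / Real.pi) * Real.sin (Real.pi * α / 2) * (Real.pi / Real.sin (Real.pi * α / 2)) = 1 := by
    field_simp
  calc x * ((1 / Real.pi) * Real.sin (Real.pi * α / 2) * x ^ (α - 2) *
        (Real.pi / Real.sin (Real.pi * α / 2)))
      = (x * x ^ (α - 2)) * ((1 / Real.pi) * Real.sin (Real.pi * α / 2) *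
        (Real.pi / Real.sin (Real.pi * α / 2))) := by ring
    _ = x ^ (α - 1) := by rw [ex, hone, mul_one]
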